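/- A prime-field-valued signal is completely determined by the FFHT coefficients indexed by one representative of each Hartley cyclotomic coset: assume F has characteristic p (p an odd prime), j^p = −j, and (N : F) is invertible in F. Let S ⊆ ZMod N be a set meeting every orbit of the multiplication-by-(−p) action on ZMod N (i.e., for every k ∈ ZMod N there exist s ∈ S and n ∈ ℕ with s = (−p)^n·k in ZMod N). If v, w : ZMod N → F satisfy v_i^p = v_i and w_i^p = w_i for all i, and their FFHTs agree on S, then v = w. -/
import Mathlib

/-- The finite-field `cas` (cos-and-sin) carrier function over a field `F`:
`cas_k(i) = ((1 - j)·ζ^{ki} + (1 + j)·ζ^{-ki})/2`, where the exponents are taken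
through representatives of `k·i` in `ZMod N`. -/
def cas {F : Type*} [Field F] {N : ℕ} (j ζ : F) (k i : ZMod N) : F :=
  ((1 - j) * ζ ^ (k * i).val + (1 + j) * ζ ^ (-(k * i)).val) / 2

section Aux

variable {F : Type*} [Field F] {N : ℕ} [NeZero N]

private lemma e_natCast (ζ : F) (hζ : orderOf ζ = N) (n : ℕ) :
    ζ ^ ((n : ZMod N)).val = ζ ^ n := by
  rw [ZMod.val_natCast, ← hζ]; exact pow_mod_orderOf ζ n

private lemma e_cast_mul (ζ : F) (hζ : orderOf ζ = N) (a : ℕ) (t : ZMod N) :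
    ζ ^ (((a : ZMod N) * t)).val = (ζ ^ t.val) ^ a := by
  have h : (a : ZMod N) * t = ((a * t.val : ℕ) : ZMod N) := by
    rw [Nat.cast_mul, ZMod.natCast_rightInverse t]
  rw [h, e_natCast ζ hζ, mul_comm, pow_mul]

private lemma e_mul (ζ : F) (hζ : orderOf ζ = N) (a b : ZMod N) :
    ζ ^ a.val * ζ ^ b.val = ζ ^ (a + b).val := by
  have h : a + b = ((a.val + b.val : ℕ) : ZMod N) := by
    rw [Nat.cast_add, ZMod.natCast_rightInverse a, ZMod.natCast_rightInverse b]
  rw [h, e_natCast ζ hζ, pow_add]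

private lemma sum_zmod (f : ℕ → F) :
    ∑ k : ZMod N, f k.val = ∑ i ∈ Finset.range N, f i := by
  refine Finset.sum_nbij' (fun k => k.val) (fun i => (i : ZMod N)) ?_ ?_ ?_ ?_ ?_
  · intro a _; exact Finset.mem_range.mpr (ZMod.val_lt a)
  · intro a _; exact Finset.mem_univ _
  · intro a _; exact ZMod.natCast_rightInverse a
  · intro a ha; exact ZMod.val_natCast_of_lt (Finset.mem_range.mp ha)
  · intro a _; rfl

private lemma sum_e (ζ : F) (hζ : orderOf ζ = N) (t : ZMod N) :
    ∑ k : ZMod N, ζ ^ (k * t).val = if t = 0 then (N : F) else 0 := by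
  have hrw : ∀ k : ZMod N, ζ ^ (k * t).val = (ζ ^ t.val) ^ k.val := by
    intro k
    conv_lhs => rw [show k = ((k.val : ℕ) : ZMod N) from (ZMod.natCast_rightInverse k).symm]
    rw [e_cast_mul ζ hζ]
  simp only [hrw]
  rw [sum_zmod (fun i => (ζ ^ t.val) ^ i)]
  by_cases ht : t = 0
  · simp [ht]
  · rw [if_neg ht]
    have h1 : (ζ ^ t.val) ≠ 1 := by
      intro h
      have hdvd : N ∣ t.val := by
        have := orderOf_dvd_iff_pow_eq_one.mpr h
        rwa [hζ] at this
      have hv0 : t.val = 0 := Nat.eq_zero_of_dvd_of_lt hdvd (ZMod.val_lt t)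
      exact ht ((ZMod.val_eq_zero t).mp hv0)
    have hz : ζ ^ N = 1 := by
      have := pow_orderOf_eq_one ζ
      rwa [hζ] at this
    have hx : (ζ ^ t.val) ^ N = 1 := by
      rw [← pow_mul, mul_comm, pow_mul, hz, one_pow]
    have hgs := geom_sum_mul (ζ ^ t.val) N
    rw [hx, sub_self] at hgs
    rcases mul_eq_zero.mp hgs with h | h
    · exact h
    · exact absurd (sub_eq_zero.mp h) h1

private lemma cas_orth (j ζ : F) (hζ : orderOf ζ = N) (hj : j ^ 2 = -1)
    (h2 : IsUnit (2 : F)) (i m : ZMod N) :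
    ∑ k : ZMod N, cas j ζ k i * cas j ζ k m = if i = m then (N : F) else 0 := by
  have h2' : (2 : F) ≠ 0 := h2.ne_zero
  have h4 : (4 : F) ≠ 0 := by
    intro h
    have : (2 : F) * 2 = 4 := by norm_num
    rw [h] at this; exact h2' (mul_self_eq_zero.mp this)
  have hdiv : ∀ u v : F, u / 2 * (v / 2) * 4 = u * v := by
    intro u v
    rw [div_mul_div_comm, show (2 : F) * 2 = 4 by norm_num, div_mul_cancel₀ _ h4]
  have key : ∀ k : ZMod N, cas j ζ k i * cas j ζ k m * 4 =
      (1 - j) ^ 2 * ζ ^ (k * (i + m)).val + 2 * ζ ^ (k * (i - m)).val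
        + 2 * ζ ^ (k * (m - i)).val + (1 + j) ^ 2 * ζ ^ (k * (-(i + m))).val := by
    intro k
    have e1 : ζ ^ (k * i).val * ζ ^ (k * m).val = ζ ^ (k * (i + m)).val := by
      rw [e_mul ζ hζ, mul_add]
    have e2 : ζ ^ (k * i).val * ζ ^ (-(k * m)).val = ζ ^ (k * (i - m)).val := by
      rw [e_mul ζ hζ]; ring_nf
    have e3 : ζ ^ (-(k * i)).val * ζ ^ (k * m).val = ζ ^ (k * (m - i)).val := by
      rw [e_mul ζ hζ]; ring_nf
    have e4 : ζ ^ (-(k * i)).val * ζ ^ (-(k * m)).val = ζ ^ (k * (-(i + m))).val := by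
      rw [e_mul ζ hζ]; ring_nf
    unfold cas
    rw [hdiv]
    linear_combination (1 - j) ^ 2 * e1 + ((1 - j) * (1 + j)) * e2
      + ((1 - j) * (1 + j)) * e3 + (1 + j) ^ 2 * e4
      - (ζ ^ (k * (i - m)).val + ζ ^ (k * (m - i)).val) * hj
  have hsum4 : (∑ k : ZMod N, cas j ζ k i * cas j ζ k m) * 4
      = ((1 - j) ^ 2 + (1 + j) ^ 2) * (if i + m = 0 then (N : F) else 0)
        + 4 * (if i = m then (N : F) else 0) := by
    rw [Finset.sum_mul]
    simp only [key]
    rw [Finset.sum_add_distrib, Finset.sum_add_distrib, Finset.sum_add_distrib,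
      ← Finset.mul_sum, ← Finset.mul_sum, ← Finset.mul_sum, ← Finset.mul_sum,
      sum_e ζ hζ, sum_e ζ hζ, sum_e ζ hζ, sum_e ζ hζ]
    have hneg : (-(i + m) = 0) ↔ (i + m = 0) := neg_eq_zero
    have hsub1 : (i - m = 0) ↔ (i = m) := sub_eq_zero
    have hsub2 : (m - i = 0) ↔ (i = m) := by rw [sub_eq_zero]; exact eq_comm
    simp only [hneg, hsub1, hsub2]
    ring
  have hA2B2 : (1 - j) ^ 2 + (1 + j) ^ 2 = 0 := by linear_combination 2 * hj
  rw [hA2B2, zero_mul] at hsum4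
  have : (∑ k : ZMod N, cas j ζ k i * cas j ζ k m) * 4
      = (if i = m then (N : F) else 0) * 4 := by
    rw [hsum4]; by_cases heq : i = m <;> simp [heq, mul_comm]
  exact mul_right_cancel₀ h4 this

private lemma cas_pow (p : ℕ) [Fact p.Prime] [CharP F p] (j ζ : F)
    (hζ : orderOf ζ = N) (hjp : j ^ p = -j) (k i : ZMod N) :
    cas j ζ k i ^ p = cas j ζ (-(p : ZMod N) * k) i := by
  have hA : (1 - j) ^ p = 1 + j := by
    rw [sub_pow_char, one_pow, hjp]; ring
  have hB : (1 + j) ^ p = 1 - j := by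
    rw [add_pow_char, one_pow, hjp]; ring
  have h2p : (2 : F) ^ p = 2 := by
    rw [show (2 : F) = 1 + 1 by norm_num, add_pow_char, one_pow]
  have hx : (ζ ^ (k * i).val) ^ p = ζ ^ ((p : ZMod N) * (k * i)).val := by
    rw [e_cast_mul ζ hζ]
  have hy : (ζ ^ (-(k * i)).val) ^ p = ζ ^ ((p : ZMod N) * (-(k * i))).val := by
    rw [e_cast_mul ζ hζ]
  have hz1 : -(p : ZMod N) * k * i = (p : ZMod N) * (-(k * i)) := by ring
  have hz2 : -(-(p : ZMod N) * k * i) = (p : ZMod N) * (k * i) := by ring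
  unfold cas
  rw [div_pow, add_pow_char, mul_pow, mul_pow, hA, hB, h2p, hx, hy, hz2, hz1]
  ring

end Aux

/-- A prime-field-valued signal is completely determined by the FFHT coefficients
indexed by one representative of each Hartley cyclotomic coset (the orbits of the
multiplication-by-`(-p)` action on `ZMod N`). -/
theorem ffht_determined_by_coset_leaders {F : Type*} [Field F] (p N : ℕ)
    [Fact p.Prime] (hodd : Odd p) [CharP F p] [NeZero N]
    (j ζ : F) (h2 : IsUnit (2 : F)) (hj : j ^ 2 = -1) (hjp : j ^ p = -j)
    (hζ : orderOf ζ = N) (hNunit : IsUnit (N : F))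
    (S : Set (ZMod N))
    (hS : ∀ k : ZMod N, ∃ s ∈ S, ∃ n : ℕ, s = (-(p : ZMod N)) ^ n * k)
    (v w : ZMod N → F)
    (hv : ∀ i : ZMod N, v i ^ p = v i)
    (hw : ∀ i : ZMod N, w i ^ p = w i)
    (hagree : ∀ s ∈ S, ∑ i : ZMod N, v i * cas j ζ s i
      = ∑ i : ZMod N, w i * cas j ζ s i) :
    v = w := by
  set u : ZMod N → F := fun i => v i - w i with hu_def
  have hu : ∀ i, u i ^ p = u i := by
    intro i; simp only [hu_def]; rw [sub_pow_char, hv, hw]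
  set U : ZMod N → F := fun k => ∑ i : ZMod N, u i * cas j ζ k i with hU_def
  have hUf : ∀ k, U k ^ p = U (-(p : ZMod N) * k) := by
    intro k
    simp only [hU_def]
    rw [sum_pow_char]
    refine Finset.sum_congr rfl fun i _ => ?_
    rw [mul_pow, hu, cas_pow p j ζ hζ hjp]
  have hUiter : ∀ (n : ℕ) (k : ZMod N), U ((-(p : ZMod N)) ^ n * k) = U k ^ p ^ n := by
    intro n
    induction n with
    | zero => intro k; simp
    | succ n ih =>
      intro k
      have : (-(p : ZMod N)) ^ (n + 1) * k = -(p : ZMod N) * ((-(p : ZMod N)) ^ n * k) := by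
        ring
      rw [this, ← hUf, ih, ← pow_mul, pow_succ]
  have hUS : ∀ s ∈ S, U s = 0 := by
    intro s hs
    simp only [hU_def, hu_def, sub_mul]
    rw [Finset.sum_sub_distrib, hagree s hs, sub_self]
  have hU : ∀ k, U k = 0 := by
    intro k
    obtain ⟨s, hsS, n, hs⟩ := hS k
    have h0 := hUS s hsS
    rw [hs, hUiter] at h0
    have hpn : p ^ n ≠ 0 := pow_ne_zero n (Fact.out (p := p.Prime)).ne_zero
    exact pow_eq_zero_iff hpn |>.mp h0
  funext m
  have h0 : ∑ k : ZMod N, U k * cas j ζ k m = 0 := by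
    simp [hU]
  have hinv : ∑ k : ZMod N, U k * cas j ζ k m = u m * (N : F) := by
    simp only [hU_def, Finset.sum_mul]
    rw [Finset.sum_comm]
    have : ∀ i : ZMod N, ∑ k : ZMod N, u i * cas j ζ k i * cas j ζ k m
        = u i * (if i = m then (N : F) else 0) := by
      intro i
      rw [← cas_orth j ζ hζ hj h2 i m, Finset.mul_sum]
      exact Finset.sum_congr rfl fun k _ => by ring
    simp only [this, mul_ite, mul_zero]
    rw [Finset.sum_ite_eq' Finset.univ m fun i => u i * (N : F)]
    simp
  rw [h0] at hinv
  have hum : u m = 0 := by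
    rcases mul_eq_zero.mp hinv.symm with h | h
    · exact h
    · exact absurd h hNunit.ne_zero
  have := sub_eq_zero.mp hum
  exact this
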